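/- Let 𝕜 be an RCLike field (ℝ or ℂ), d ≥ 1, and let U : Fin (2*d - 1) → Submodule 𝕜 (EuclideanSpace 𝕜 (Fin d)) be a generic set of lines: finrank 𝕜 (U i) = 1 for every i, U i ⊓ (U j)ᗮ = ⊥ for all i, j, and for every d-element subset s of Fin (2*d - 1) one has ⨆ i ∈ s, U i = ⊤. Then for every submodule X of EuclideanSpace 𝕜 (Fin d): if X = ⊥ then ⨆ i, (U i ⊓ (X ⊔ (U i)ᗮ)) = ⊥, and if X ≠ ⊥ then ⨆ i, (U i ⊓ (X ⊔ (U i)ᗮ)) = ⊤. -/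

import Mathlib

theorem projections_to_generic_lines {𝕜 : Type*} [RCLike 𝕜] {d : ℕ} (hd : 1 ≤ d)
    (U : Fin (2 * d - 1) → Submodule 𝕜 (EuclideanSpace 𝕜 (Fin d)))
    (hrank : ∀ i, Module.finrank 𝕜 (U i) = 1)
    (hperp : ∀ i j, U i ⊓ (U j)ᗮ = ⊥)
    (hspan : ∀ s : Finset (Fin (2 * d - 1)), s.card = d → (⨆ i ∈ s, U i) = ⊤)
    (X : Submodule 𝕜 (EuclideanSpace 𝕜 (Fin d))) :
    (X = ⊥ → (⨆ i, U i ⊓ (X ⊔ (U i)ᗮ)) = ⊥) ∧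
    (X ≠ ⊥ → (⨆ i, U i ⊓ (X ⊔ (U i)ᗮ)) = ⊤) := by
  have hfin : Module.finrank 𝕜 (EuclideanSpace 𝕜 (Fin d)) = d := finrank_euclideanSpace_fin
  constructor
  · rintro rfl
    simp [Submodule.inf_orthogonal_eq_bot]
  · intro hX
    -- key: if U i is not orthogonal to X, the projection is all of U i
    have key : ∀ i, ¬ U i ≤ Xᗮ → U i ⊓ (X ⊔ (U i)ᗮ) = U i := by
      intro i hi
      have hXle : ¬ X ≤ (U i)ᗮ := by
        intro h
        apply hi
        intro u hu
        rw [Submodule.mem_orthogonal]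
        intro x hx
        exact inner_eq_zero_symm.mp (h hx u hu)
      obtain ⟨x, hxX, hxni⟩ := Set.not_subset.mp hXle
      have hlt : (U i)ᗮ < X ⊔ (U i)ᗮ := by
        refine lt_of_le_of_ne le_sup_right fun h => hxni ?_
        rw [h]
        exact Submodule.mem_sup_left hxX
      have hrankperp : Module.finrank 𝕜 ((U i)ᗮ) = d - 1 := by
        have := Submodule.finrank_add_finrank_orthogonal (K := U i)
        rw [hrank i, hfin] at this
        omega
      have htop : X ⊔ (U i)ᗮ = ⊤ := by
        apply Submodule.eq_top_of_finrank_eq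
        have h1 : Module.finrank 𝕜 ((U i)ᗮ) < Module.finrank 𝕜 ↥(X ⊔ (U i)ᗮ) :=
          Submodule.finrank_lt_finrank_of_lt hlt
        have h2 : Module.finrank 𝕜 ↥(X ⊔ (U i)ᗮ) ≤ d := by
          simpa [hfin] using Submodule.finrank_le (X ⊔ (U i)ᗮ)
        rw [hfin]
        omega
      rw [htop, inf_top_eq]
    classical
    -- the set of "bad" indices
    set S : Finset (Fin (2 * d - 1)) := Finset.univ.filter (fun i => U i ≤ Xᗮ) with hS
    have hScard : S.card ≤ d - 1 := by
      by_contra h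
      push_neg at h
      have : d ≤ S.card := by omega
      obtain ⟨t, hts, htcard⟩ := Finset.exists_subset_card_eq this
      have htop : (⨆ i ∈ t, U i) = ⊤ := hspan t htcard
      have hle : (⨆ i ∈ t, U i) ≤ Xᗮ := by
        apply iSup_le; intro i; apply iSup_le; intro hit
        have := hts hit
        rw [hS, Finset.mem_filter] at this
        exact this.2
      rw [htop, top_le_iff] at hle
      apply hX
      have : X ≤ Xᗮᗮ := Submodule.le_orthogonal_orthogonal X
      rw [hle] at this
      simpa using this
    have hcompl : d ≤ Sᶜ.card := by
      have := Finset.card_compl S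
      have hcard : Fintype.card (Fin (2 * d - 1)) = 2 * d - 1 := Fintype.card_fin _
      omega
    obtain ⟨t, hts, htcard⟩ := Finset.exists_subset_card_eq hcompl
    have htop : (⨆ i ∈ t, U i) = ⊤ := hspan t htcard
    apply top_le_iff.mp
    rw [← htop]
    apply iSup_le; intro i; apply iSup_le; intro hit
    have hiS : i ∉ S := Finset.mem_compl.mp (hts hit)
    rw [hS, Finset.mem_filter] at hiS
    push_neg at hiS
    have := key i (hiS (Finset.mem_univ i))
    calc U i = U i ⊓ (X ⊔ (U i)ᗮ) := this.symm
      _ ≤ ⨆ j, U j ⊓ (X ⊔ (U j)ᗮ) := le_iSup (fun j => U j ⊓ (X ⊔ (U j)ᗮ)) i
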